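/- arXiv:1805.02144 — 5 statements merged into one kernel-verified Lean document; each statement's English description precedes it below -/
import Mathlib

section
/- Let E be a finite-dimensional real normed vector space, J : E → E a continuous linear map, and N : ℝ → E continuous. Suppose u : ℝ → E is differentiable and satisfies u'(t) = J(u(t)) + N(t) for all t. Then for every t₀ and every h ≥ 0, u(t₀ + h) = exp(hJ)(u(t₀)) + h·φ₁(hJ)(N(t₀)) + ∫₀ʰ exp((h−τ)J)(N(t₀+τ) − N(t₀)) dτ; in particular the local error of the exponential Rosenbrock–Euler step is exactly the integral remainder term. -/
set_option maxHeartbeats 1000000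
set_option synthInstance.maxHeartbeats 400000


open MeasureTheory intervalIntegral

/-- The `φ`-functions of exponential integrators, for a continuous linear
endomorphism `A` of a finite-dimensional real normed vector space:
`φ₀(A) = exp(A)` and, for `k ≥ 1`,
`φ_k(A) = ∫₀¹ exp((1-θ)A) · θ^(k-1)/(k-1)! dθ`. -/
noncomputable def phiOp {E : Type*} [NormedAddCommGroup E] [NormedSpace ℝ E]
    [FiniteDimensional ℝ E] : ℕ → (E →L[ℝ] E) → (E →L[ℝ] E)
  | 0, A => NormedSpace.exp A
  | (k + 1), A =>
      ∫ θ in (0:ℝ)..1, (θ ^ k / (k.factorial : ℝ)) • NormedSpace.exp ((1 - θ) • A)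

/-- If `u'(t) = J(u(t)) + N(t)` with `J` linear and `N` continuous then, for every
`t₀` and `h ≥ 0`,
`u(t₀+h) = exp(hJ)(u(t₀)) + h φ₁(hJ)(N(t₀)) + ∫₀ʰ exp((h-τ)J)(N(t₀+τ) - N(t₀)) dτ`;
the local error of the exponential Rosenbrock–Euler step is exactly the integral
remainder term. -/
theorem exprb_euler_local_error_representation
    {E : Type*} [NormedAddCommGroup E] [NormedSpace ℝ E] [FiniteDimensional ℝ E]
    (J : E →L[ℝ] E) (N : ℝ → E) (hN : Continuous N)
    (u : ℝ → E) (hu : ∀ t : ℝ, HasDerivAt u (J (u t) + N t) t) :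
    ∀ (t₀ h : ℝ), 0 ≤ h →
      u (t₀ + h) = NormedSpace.exp (h • J) (u t₀) + h • phiOp 1 (h • J) (N t₀)
        + ∫ τ in (0:ℝ)..h, NormedSpace.exp ((h - τ) • J) (N (t₀ + τ) - N t₀) := by
  intro t₀ h h0
  letI : NormedAlgebra ℚ (E →L[ℝ] E) := NormedAlgebra.restrictScalars ℚ ℝ (E →L[ℝ] E)
  set A : ℝ → (E →L[ℝ] E) := fun τ => NormedSpace.exp (τ • (-J)) with hA
  have hAcont : Continuous A :=
    NormedSpace.exp_continuous.comp (continuous_id.smul continuous_const)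
  have hNshift : Continuous fun τ : ℝ => N (t₀ + τ) :=
    hN.comp (continuous_const.add continuous_id)
  have hgcont : Continuous fun τ : ℝ => A τ (N (t₀ + τ)) := hAcont.clm_apply hNshift
  have hg : ∀ τ : ℝ, HasDerivAt (fun s => A s (u (t₀ + s))) (A τ (N (t₀ + τ))) τ := by
    intro τ
    have hΦ : HasDerivAt A (A τ * (-J)) τ := hasDerivAt_exp_smul_const (-J) τ
    have hu' : HasDerivAt (fun s => u (t₀ + s)) (J (u (t₀ + τ)) + N (t₀ + τ)) τ := by
      simpa [Function.comp_def] using (hu (t₀ + τ)).scomp τ ((hasDerivAt_id τ).const_add t₀)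
    have := hΦ.clm_apply hu'
    convert this using 1
    simp [ContinuousLinearMap.mul_apply, map_add]
  have key : u t₀ + (∫ τ in (0:ℝ)..h, A τ (N (t₀ + τ))) = A h (u (t₀ + h)) := by
    have := intervalIntegral.integral_eq_sub_of_hasDerivAt
      (fun τ _ => hg τ) (hgcont.intervalIntegrable 0 h)
    rw [this]
    simp [hA, NormedSpace.exp_zero]
  -- exp (h•J) inverts A h
  have hcomm : ∀ a b : ℝ, NormedSpace.exp (a • J) * NormedSpace.exp (b • (-J))
      = NormedSpace.exp ((a - b) • J) := by
    intro a b
    rw [← NormedSpace.exp_add_of_commute (((Commute.refl J).neg_right.smul_right b).smul_left a)]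
    congr 1
    rw [smul_neg, sub_smul]
    abel
  have hinv : NormedSpace.exp (h • J) (A h (u (t₀ + h))) = u (t₀ + h) := by
    rw [← ContinuousLinearMap.comp_apply, ← ContinuousLinearMap.mul_def, hcomm, sub_self,
      zero_smul, NormedSpace.exp_zero, ContinuousLinearMap.one_apply]
  have hmain : u (t₀ + h) = NormedSpace.exp (h • J) (u t₀)
      + ∫ τ in (0:ℝ)..h, NormedSpace.exp ((h - τ) • J) (N (t₀ + τ)) := by
    rw [← hinv, ← key, map_add]
    congr 1
    rw [← ContinuousLinearMap.intervalIntegral_comp_comm _ (hgcont.intervalIntegrable 0 h)]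
    refine intervalIntegral.integral_congr fun τ _ => ?_
    rw [← ContinuousLinearMap.mul_apply, hcomm]
  -- split the integral
  have hBcont : Continuous fun τ : ℝ => NormedSpace.exp ((h - τ) • J) :=
    NormedSpace.exp_continuous.comp ((continuous_const.sub continuous_id).smul continuous_const)
  have hsplit : (∫ τ in (0:ℝ)..h, NormedSpace.exp ((h - τ) • J) (N (t₀ + τ)))
      = (∫ τ in (0:ℝ)..h, NormedSpace.exp ((h - τ) • J) (N (t₀ + τ) - N t₀))
        + ∫ τ in (0:ℝ)..h, NormedSpace.exp ((h - τ) • J) (N t₀) := by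
    rw [← intervalIntegral.integral_add
      ((hBcont.clm_apply (by exact hNshift.sub continuous_const : Continuous fun τ => N (t₀ + τ) - N t₀)).intervalIntegrable 0 h)
      ((hBcont.clm_apply continuous_const).intervalIntegrable 0 h)]
    refine intervalIntegral.integral_congr fun τ _ => ?_
    rw [← map_add, sub_add_cancel]
  -- phi₁ term
  have hphi : h • phiOp 1 (h • J) (N t₀)
      = ∫ τ in (0:ℝ)..h, NormedSpace.exp ((h - τ) • J) (N t₀) := by
    have hint : IntervalIntegrable
        (fun θ : ℝ => ((θ:ℝ) ^ 0 / ((0:ℕ).factorial : ℝ)) • NormedSpace.exp ((1 - θ) • h • J))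
        volume 0 1 := by
      exact (((continuous_pow 0).div_const _).smul (NormedSpace.exp_continuous.comp
        ((continuous_const.sub continuous_id).smul continuous_const))).intervalIntegrable 0 1
    have e1 : phiOp 1 (h • J) (N t₀)
        = ∫ θ in (0:ℝ)..1, NormedSpace.exp ((h - h * θ) • J) (N t₀) := by
      show (∫ θ in (0:ℝ)..1, ((θ:ℝ) ^ 0 / ((0:ℕ).factorial : ℝ)) •
          NormedSpace.exp ((1 - θ) • h • J)) (N t₀) = _
      rw [ContinuousLinearMap.intervalIntegral_apply hint]
      refine intervalIntegral.integral_congr fun θ _ => ?_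
      simp [smul_smul, mul_comm, mul_sub, sub_mul]
    rw [e1, intervalIntegral.smul_integral_comp_mul_left
      (fun τ => NormedSpace.exp ((h - τ) • J) (N t₀)) h]
    norm_num
  rw [hmain, hsplit, hphi]
  abel
end

section
/- Local error of the exponential Rosenbrock–Euler method: let E be a finite-dimensional real normed vector space, F : E → E twice continuously differentiable, h > 0, and let u : [t₀, t₀ + h] → E satisfy u'(t) = F(u(t)). Set J = DF(u(t₀)). Suppose there are constants C, M₁, M₂ ≥ 0 and an open convex set U containing u([t₀, t₀+h]) such that ‖exp(sJ)‖ ≤ C for all s ∈ [0,h], ‖u'(t)‖ ≤ M₁ for all t ∈ [t₀, t₀+h], and ‖D²F(x)‖ ≤ M₂ for all x ∈ U. Then ‖u(t₀+h) − u(t₀) − h·φ₁(hJ)(F(u(t₀)))‖ ≤ (C·M₂·M₁²/6)·h³; in particular the exponential Rosenbrock–Euler scheme u_{n+1} = u_n + hφ₁(hJ_n)F(u_n) has local error of order three with a constant independent of ‖J‖. -/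
open MeasureTheory intervalIntegral Set

/-- Fencing lemma: if `f a = 0` and `‖f'‖ ≤ K (t-a)^n` on `[a,b]`, then
`‖f t‖ ≤ K/(n+1) (t-a)^(n+1)`. -/
theorem fence_pow {E : Type*} [NormedAddCommGroup E] [NormedSpace ℝ E]
    {f f' : ℝ → E} {a b K : ℝ} (n : ℕ)
    (hf : ∀ t ∈ Icc a b, HasDerivWithinAt f (f' t) (Icc a b) t)
    (ha : f a = 0)
    (bound : ∀ t ∈ Icc a b, ‖f' t‖ ≤ K * (t - a) ^ n) :
    ∀ t ∈ Icc a b, ‖f t‖ ≤ K / (n + 1) * (t - a) ^ (n + 1) := by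
  have hB : ∀ x : ℝ, HasDerivAt (fun t => K / (n + 1) * (t - a) ^ (n + 1))
      (K * (x - a) ^ n) x := by
    intro x
    have h1 : HasDerivAt (fun t : ℝ => (t - a) ^ (n + 1))
        (((n : ℝ) + 1) * (x - a) ^ n) x := by
      simpa [Pi.pow_def] using ((hasDerivAt_id x).sub_const a).pow (n + 1)
    have := h1.const_mul (K / (n + 1))
    refine this.congr_deriv ?_
    have hn : ((n : ℝ) + 1) ≠ 0 := by positivity
    field_simp
  have key := image_norm_le_of_norm_deriv_right_le_deriv_boundary
    (f := f) (f' := f') (a := a) (b := b)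
    (fun t ht => (hf t ht).continuousWithinAt)
    (fun t ht => (hf t (Ico_subset_Icc_self ht)).mono_of_mem_nhdsWithin
      (Icc_mem_nhdsGE_of_mem ht))
    (B := fun t => K / (n + 1) * (t - a) ^ (n + 1)) (B' := fun t => K * (t - a) ^ n)
    (by simp [ha]) hB (fun t ht => bound t (Ico_subset_Icc_self ht))
  exact fun t ht => key ht

/-- Local error of the exponential Rosenbrock–Euler method: if `u' = F(u)` on
`[t₀, t₀+h]`, `J = DF(u(t₀))`, `‖exp(sJ)‖ ≤ C` on `[0,h]`, `‖u'‖ ≤ M₁` along the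
solution and `‖D²F‖ ≤ M₂` on an open convex set containing the solution, then
`‖u(t₀+h) - u(t₀) - h φ₁(hJ) F(u(t₀))‖ ≤ (C M₂ M₁²/6) h³`, with a constant
independent of `‖J‖`. -/
theorem exprb_euler_local_error
    {E : Type*} [NormedAddCommGroup E] [NormedSpace ℝ E] [FiniteDimensional ℝ E]
    (F : E → E) (hF : ContDiff ℝ 2 F) (t₀ h : ℝ) (hh : 0 < h)
    (u : ℝ → E)
    (hu : ∀ t ∈ Icc t₀ (t₀ + h), HasDerivWithinAt u (F (u t)) (Icc t₀ (t₀ + h)) t)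
    (J : E →L[ℝ] E) (hJ : J = fderiv ℝ F (u t₀))
    (C M₁ M₂ : ℝ) (hC : 0 ≤ C) (hM₁ : 0 ≤ M₁) (hM₂ : 0 ≤ M₂)
    (U : Set E) (hU : IsOpen U) (hconv : Convex ℝ U)
    (hsol : ∀ t ∈ Icc t₀ (t₀ + h), u t ∈ U)
    (hexp : ∀ s ∈ Icc (0:ℝ) h, ‖NormedSpace.exp (s • J)‖ ≤ C)
    (hder : ∀ t ∈ Icc t₀ (t₀ + h), ‖F (u t)‖ ≤ M₁)
    (hD2F : ∀ x ∈ U, ‖iteratedFDeriv ℝ 2 F x‖ ≤ M₂) :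
    ‖u (t₀ + h) - u t₀ - h • phiOp 1 (h • J) (F (u t₀))‖
      ≤ (C * M₂ * M₁ ^ 2 / 6) * h ^ 3 := by
  set T := t₀ + h with hT
  have hle : t₀ ≤ T := by simp [hT]; positivity
  set v := F (u t₀) with hv
  -- Step 1: Lipschitz-type bound for u
  have hA1 : ∀ t ∈ Icc t₀ T, ‖u t - u t₀‖ ≤ M₁ * (t - t₀) :=
    norm_image_sub_le_of_norm_deriv_le_segment' hu
      (fun t ht => hder t (Ico_subset_Icc_self ht))
  -- differentiability of F and its derivative
  have hFd : Differentiable ℝ F := hF.differentiable two_ne_zero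
  have hDFd : Differentiable ℝ (fderiv ℝ F) :=
    (hF.fderiv_right (m := 1) le_rfl).differentiable one_ne_zero
  -- Step 2: bound on fderiv F - J along the solution
  have hJb : ∀ t ∈ Icc t₀ T, ‖fderiv ℝ F (u t) - J‖ ≤ M₂ * (M₁ * (t - t₀)) := by
    intro t ht
    have hb : ∀ x ∈ U, ‖fderiv ℝ (fderiv ℝ F) x‖ ≤ M₂ := by
      intro x hx
      calc ‖fderiv ℝ (fderiv ℝ F) x‖ = ‖iteratedFDeriv ℝ 0 (fderiv ℝ (fderiv ℝ F)) x‖ := by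
            rw [norm_iteratedFDeriv_zero]
        _ = ‖iteratedFDeriv ℝ 1 (fderiv ℝ F) x‖ := norm_iteratedFDeriv_fderiv
        _ = ‖iteratedFDeriv ℝ 2 F x‖ := norm_iteratedFDeriv_fderiv
        _ ≤ M₂ := hD2F x hx
    have := hconv.norm_image_sub_le_of_norm_fderiv_le
      (fun x hx => hDFd x) hb (hsol t₀ (left_mem_Icc.2 hle)) (hsol t ht)
    rw [hJ]
    refine this.trans ?_
    exact mul_le_mul_of_nonneg_left (hA1 t ht) hM₂
  -- Step 3: the nonlinear remainder g and its derivative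
  set g : ℝ → E := fun t => F (u t) - F (u t₀) - J (u t - u t₀) with hg_def
  have hg : ∀ t ∈ Icc t₀ T, HasDerivWithinAt g
      ((fderiv ℝ F (u t) - J) (F (u t))) (Icc t₀ T) t := by
    intro t ht
    have h1 : HasDerivWithinAt (fun t => F (u t)) (fderiv ℝ F (u t) (F (u t)))
        (Icc t₀ T) t := (hFd (u t)).hasFDerivAt.comp_hasDerivWithinAt t (hu t ht)
    have h2 : HasDerivWithinAt (fun t => J (u t - u t₀)) (J (F (u t))) (Icc t₀ T) t :=
      J.hasFDerivAt.comp_hasDerivWithinAt t ((hu t ht).sub_const (u t₀))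
    have h3 := (h1.sub_const (F (u t₀))).sub h2
    refine h3.congr_deriv ?_
    rfl
  -- Step 4: quadratic bound on g
  have hgb : ∀ t ∈ Icc t₀ T, ‖g t‖ ≤ (M₂ * M₁ ^ 2) / 2 * (t - t₀) ^ 2 := by
    have key := fence_pow (a := t₀) (b := T) (K := M₂ * M₁ ^ 2) 1 hg
      (by simp [hg_def]) ?_
    · intro t ht
      have h := key t ht
      norm_num at h
      exact h
    · intro t ht
      have h1 : ‖(fderiv ℝ F (u t) - J) (F (u t))‖ ≤ ‖fderiv ℝ F (u t) - J‖ * ‖F (u t)‖ :=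
        ContinuousLinearMap.le_opNorm _ _
      refine h1.trans ?_
      have := mul_le_mul (hJb t ht) (hder t ht) (norm_nonneg _)
        (mul_nonneg hM₂ (mul_nonneg hM₁ (by linarith [ht.1])))
      refine this.trans (le_of_eq ?_)
      ring
  -- the CLM-valued function exp((T - t) • J)
  set c : ℝ → (E →L[ℝ] E) := fun t => NormedSpace.exp ((T - t) • J) with hc_def
  have hc : ∀ t : ℝ, HasDerivAt c (-(c t * J)) t := by
    intro t
    have h1 := hasDerivAt_exp_smul_const (𝕂 := ℝ) J (T - t)
    have h2 : HasDerivAt (fun s : ℝ => T - s) (-1) t := by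
      simpa using (hasDerivAt_id t).const_sub T
    have := h1.scomp t h2
    simpa [hc_def, Function.comp_def] using this
  have hccont : Continuous c := by
    exact (continuous_iff_continuousAt.2 fun x => (NormedSpace.exp_analytic (𝕂 := ℝ) x).continuousAt).comp ((continuous_const.sub continuous_id).smul
      continuous_const)
  have hcnorm : ∀ t ∈ Icc t₀ T, ‖c t‖ ≤ C := by
    intro t ht
    exact hexp (T - t) ⟨by linarith [ht.2], by linarith [ht.1]⟩
  -- the integral term
  have hvcont : Continuous fun s => c s v := hccont.clm_apply continuous_const
  set A : ℝ → E := fun t => ∫ s in t₀..t, c s v with hA_def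
  have hA : ∀ t : ℝ, HasDerivAt A (c t v) t := by
    intro t
    exact intervalIntegral.integral_hasDerivAt_right
      (hvcont.intervalIntegrable _ _)
      (hvcont.stronglyMeasurableAtFilter _ _)
      hvcont.continuousAt
  -- the error function
  set f : ℝ → E := fun t => c t (u t - u t₀) - A t with hf_def
  have hf : ∀ t ∈ Icc t₀ T, HasDerivWithinAt f (c t (g t)) (Icc t₀ T) t := by
    intro t ht
    have h1 : HasDerivWithinAt (fun t => c t (u t - u t₀))
        ((-(c t * J)) (u t - u t₀) + c t (F (u t))) (Icc t₀ T) t :=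
      (hc t).hasDerivWithinAt.clm_apply ((hu t ht).sub_const (u t₀))
    have := h1.sub (hA t).hasDerivWithinAt
    refine this.congr_deriv ?_
    simp only [hg_def, hv, ContinuousLinearMap.neg_apply, ContinuousLinearMap.mul_apply, map_sub]
    abel
  -- cubic bound via fencing
  have hfb : ∀ t ∈ Icc t₀ T, ‖f t‖ ≤ (C * (M₂ * M₁ ^ 2) / 2) / 3 * (t - t₀) ^ 3 := by
    have key := fence_pow (a := t₀) (b := T) (K := C * (M₂ * M₁ ^ 2) / 2) 2 hf
      (by simp [hf_def, hA_def]) ?_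
    · intro t ht
      have hk := key t ht
      norm_num at hk ⊢
      convert hk using 2
    · intro t ht
      calc ‖c t (g t)‖ ≤ ‖c t‖ * ‖g t‖ := ContinuousLinearMap.le_opNorm _ _
        _ ≤ C * ((M₂ * M₁ ^ 2) / 2 * (t - t₀) ^ 2) := by
            refine mul_le_mul (hcnorm t ht) (hgb t ht) (norm_nonneg _) hC
        _ = C * (M₂ * M₁ ^ 2) / 2 * (t - t₀) ^ 2 := by ring
  -- identify f T with the local error
  have hcT : c T = 1 := by
    simp [hc_def, NormedSpace.exp_zero]
  have hAT : A T = h • phiOp 1 (h • J) v := by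
    -- change of variables s = t₀ + h * θ
    have hcov : (∫ θ in (0:ℝ)..1, h • (c (t₀ + h * θ) v)) = ∫ s in t₀..T, c s v := by
      have := intervalIntegral.integral_comp_smul_deriv (a := (0:ℝ)) (b := 1)
        (f := fun θ => t₀ + h * θ) (f' := fun _ => h) (g := fun s => c s v)
        (fun θ _ => by
          simpa using ((hasDerivAt_id θ).const_mul h).const_add t₀)
        continuousOn_const hvcont
      simpa [hT, mul_one] using this
    have hphi : phiOp 1 (h • J) v
        = ∫ θ in (0:ℝ)..1, (NormedSpace.exp ((1 - θ) • (h • J))) v := by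
      show (∫ θ in (0:ℝ)..1,
        ((θ:ℝ) ^ 0 / ((Nat.factorial 0 : ℕ) : ℝ)) • NormedSpace.exp ((1 - θ) • (h • J))) v = _
      simp only [pow_zero, Nat.factorial_zero, Nat.cast_one, div_one, one_smul]
      rw [intervalIntegral.integral_of_le zero_le_one,
        intervalIntegral.integral_of_le zero_le_one]
      refine ContinuousLinearMap.integral_apply ?_ v
      refine Continuous.integrableOn_Ioc ?_
      exact (continuous_iff_continuousAt.2 fun x => (NormedSpace.exp_analytic (𝕂 := ℝ) x).continuousAt).comp ((continuous_const.sub continuous_id).smul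
        continuous_const)
    have hceq : ∀ θ : ℝ, c (t₀ + h * θ) v = (NormedSpace.exp ((1 - θ) • (h • J))) v := by
      intro θ
      have : (T - (t₀ + h * θ)) • J = (1 - θ) • (h • J) := by
        rw [smul_smul]; congr 1; simp [hT]; ring
      simp [hc_def, this]
    rw [hphi, ← intervalIntegral.integral_smul]
    rw [show (∫ θ in (0:ℝ)..1, h • (NormedSpace.exp ((1 - θ) • (h • J))) v)
        = ∫ θ in (0:ℝ)..1, h • (c (t₀ + h * θ)) v from
      intervalIntegral.integral_congr (fun θ _ => by rw [hceq θ])]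
    rw [hcov]
  have hfT : f T = u T - u t₀ - h • phiOp 1 (h • J) v := by
    simp [hf_def, hcT, hAT]
  have := hfb T (right_mem_Icc.2 hle)
  rw [hfT] at this
  refine this.trans (le_of_eq ?_)
  have : T - t₀ = h := by simp [hT]
  rw [this]; ring
end

section
/- Let E be a finite-dimensional real normed vector space, A : E → E a continuous linear map, p ≥ 1 an integer, and v₀, v₁, …, v_p ∈ E. Define y : ℝ → E by y(t) = exp(tA)(v₀) + Σ_{k=1}^{p} t^k · φ_k(tA)(v_k). Then y(0) = v₀ and y is differentiable with y'(t) = A(y(t)) + Σ_{j=1}^{p} (t^{j−1}/(j−1)!)·v_j for all t; consequently the linear combination φ₀(A)v₀ + φ₁(A)v₁ + ⋯ + φ_p(A)v_p equals the value y(1) of the solution of this initial value problem. -/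
open MeasureTheory intervalIntegral Finset

set_option synthInstance.maxHeartbeats 1000000
set_option maxHeartbeats 1000000

section Aux

variable {E : Type*} [NormedAddCommGroup E] [NormedSpace ℝ E] [FiniteDimensional ℝ E]

lemma exp_inv_apply (A : E →L[ℝ] E) (t : ℝ) (x : E) :
    NormedSpace.exp (t • A) (NormedSpace.exp ((-t) • A) x) = x := by
  let +nondep : NormedAlgebra ℚ (E →L[ℝ] E) := .restrictScalars ℚ ℝ _
  have h : NormedSpace.exp (t • A) * NormedSpace.exp ((-t) • A) = 1 := by
    rw [← NormedSpace.exp_add_of_commute]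
    · rw [neg_smul, add_neg_cancel, NormedSpace.exp_zero]
    · rw [neg_smul]; exact (Commute.refl _).neg_right
  calc NormedSpace.exp (t • A) (NormedSpace.exp ((-t) • A) x)
      = (NormedSpace.exp (t • A) * NormedSpace.exp ((-t) • A)) x := rfl
    _ = x := by rw [h]; rfl

lemma phi_key (A : E →L[ℝ] E) (m : ℕ) (t : ℝ) (v : E) :
    t ^ (m + 1) • phiOp (m + 1) (t • A) v
      = NormedSpace.exp (t • A)
          (∫ s in (0:ℝ)..t, (s ^ m / (m.factorial : ℝ)) • NormedSpace.exp ((-s) • A) v) := by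
  let +nondep : NormedAlgebra ℚ (E →L[ℝ] E) := .restrictScalars ℚ ℝ _
  have hcexp : Continuous (NormedSpace.exp : (E →L[ℝ] E) → (E →L[ℝ] E)) :=
    NormedSpace.exp_continuous
  have hc1 : Continuous fun θ : ℝ =>
      (θ ^ m / (m.factorial : ℝ)) • NormedSpace.exp ((1 - θ) • (t • A)) :=
    ((continuous_pow m).div_const _).smul
      (hcexp.comp ((continuous_const.sub continuous_id).smul continuous_const))
  have hc2 : Continuous fun θ : ℝ =>
      (θ ^ m / (m.factorial : ℝ)) • NormedSpace.exp ((-(t * θ)) • A) v :=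
    ((continuous_pow m).div_const _).smul
      ((hcexp.comp (((continuous_const.mul continuous_id).neg).smul
        continuous_const)).clm_apply continuous_const)
  have h1 : phiOp (m + 1) (t • A) v
      = ∫ θ in (0:ℝ)..1,
          (θ ^ m / (m.factorial : ℝ)) • NormedSpace.exp ((1 - θ) • (t • A)) v := by
    simp only [phiOp]
    rw [ContinuousLinearMap.intervalIntegral_apply (hc1.intervalIntegrable 0 1)]
    simp [ContinuousLinearMap.smul_apply]
  have hsplit : ∀ θ : ℝ, NormedSpace.exp ((1 - θ) • (t • A))
      = NormedSpace.exp (t • A) * NormedSpace.exp ((-(t * θ)) • A) := by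
    intro θ
    have h : (1 - θ) • (t • A) = t • A + (-(t * θ)) • A := by
      rw [smul_smul, ← add_smul]; congr 1; ring
    rw [h, NormedSpace.exp_add_of_commute]
    exact ((Commute.refl A).smul_left t).smul_right _
  have h2 : phiOp (m + 1) (t • A) v
      = NormedSpace.exp (t • A)
          (∫ θ in (0:ℝ)..1,
            (θ ^ m / (m.factorial : ℝ)) • NormedSpace.exp ((-(t * θ)) • A) v) := by
    rw [h1, ← ContinuousLinearMap.intervalIntegral_comp_comm _ (hc2.intervalIntegrable 0 1)]
    refine intervalIntegral.integral_congr fun θ _ => ?_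
    rw [hsplit θ, _root_.map_smul, ContinuousLinearMap.mul_apply]
  rw [h2, ← _root_.map_smul]
  congr 1
  have hcv := intervalIntegral.smul_integral_comp_mul_left
    (fun s : ℝ => (s ^ m / (m.factorial : ℝ)) • NormedSpace.exp ((-s) • A) v) (a := 0) (b := 1) t
  rw [mul_zero, mul_one] at hcv
  rw [← hcv]
  have h3 : ∀ θ : ℝ,
      ((t * θ) ^ m / (m.factorial : ℝ)) • NormedSpace.exp ((-(t * θ)) • A) v
      = t ^ m • ((θ ^ m / (m.factorial : ℝ)) • NormedSpace.exp ((-(t * θ)) • A) v) := by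
    intro θ
    rw [smul_smul, mul_pow, mul_div_assoc]
  simp only [h3]
  rw [intervalIntegral.integral_smul, smul_smul, ← pow_succ']

end Aux

/-- The function `y(t) = exp(tA)v₀ + Σ_{k=1}^p t^k φ_k(tA) v_k` satisfies
`y(0) = v₀` and `y'(t) = A y(t) + Σ_{j=1}^p (t^{j-1}/(j-1)!) v_j`; consequently
the linear combination `φ₀(A)v₀ + φ₁(A)v₁ + ⋯ + φ_p(A)v_p` equals `y(1)`. -/
theorem phi_linear_combination_is_ode_solution
    {E : Type*} [NormedAddCommGroup E] [NormedSpace ℝ E] [FiniteDimensional ℝ E]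
    (A : E →L[ℝ] E) (p : ℕ) (hp : 1 ≤ p) (v : ℕ → E)
    (y : ℝ → E)
    (hy : ∀ t : ℝ, y t = NormedSpace.exp (t • A) (v 0)
        + ∑ k ∈ Finset.Icc 1 p, t ^ k • phiOp k (t • A) (v k)) :
    y 0 = v 0 ∧
    (∀ t : ℝ, HasDerivAt y
        (A (y t) + ∑ j ∈ Finset.Icc 1 p, (t ^ (j - 1) / ((j - 1).factorial : ℝ)) • v j) t) ∧
    (∑ k ∈ Finset.range (p + 1), phiOp k A (v k)) = y 1 := by
  let +nondep : NormedAlgebra ℚ (E →L[ℝ] E) := .restrictScalars ℚ ℝ _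
  have hcexp : Continuous (NormedSpace.exp : (E →L[ℝ] E) → (E →L[ℝ] E)) :=
    NormedSpace.exp_continuous
  set g : ℕ → ℝ → E := fun k s =>
    (s ^ (k - 1) / ((k - 1).factorial : ℝ)) • NormedSpace.exp ((-s) • A) (v k) with hg
  have hgc : ∀ k, Continuous (g k) := fun k =>
    ((continuous_pow _).div_const _).smul
      ((hcexp.comp (continuous_neg.smul continuous_const)).clm_apply continuous_const)
  set w : ℝ → E := fun t => v 0 + ∑ k ∈ Finset.Icc 1 p, ∫ s in (0:ℝ)..t, g k s with hwdef
  have hyw : ∀ t : ℝ, y t = NormedSpace.exp (t • A) (w t) := by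
    intro t
    rw [hy t, hwdef]
    simp only [map_add, map_sum]
    congr 1
    refine Finset.sum_congr rfl fun k hk => ?_
    have hk1 : 1 ≤ k := (Finset.mem_Icc.mp hk).1
    have hkk : k - 1 + 1 = k := Nat.succ_pred_eq_of_pos hk1
    calc t ^ k • phiOp k (t • A) (v k)
        = t ^ (k - 1 + 1) • phiOp (k - 1 + 1) (t • A) (v k) := by rw [hkk]
      _ = NormedSpace.exp (t • A) (∫ s in (0:ℝ)..t, g k s) := by
          rw [phi_key A (k - 1) t (v k)]
  have hw : ∀ t : ℝ, HasDerivAt w (∑ k ∈ Finset.Icc 1 p, g k t) t := by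
    intro t
    refine HasDerivAt.const_add _ (HasDerivAt.fun_sum fun k _ => ?_)
    exact ((hgc k).integral_hasStrictDerivAt 0 t).hasDerivAt
  refine ⟨?_, ?_, ?_⟩
  · rw [hy 0]
    have h1 : (∑ k ∈ Finset.Icc 1 p, (0:ℝ) ^ k • phiOp k ((0:ℝ) • A) (v k)) = 0 :=
      Finset.sum_eq_zero fun k hk => by
        have : k ≠ 0 := by have := (Finset.mem_Icc.mp hk).1; omega
        rw [zero_pow this, zero_smul]
    rw [h1, add_zero, zero_smul, NormedSpace.exp_zero, ContinuousLinearMap.one_apply]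
  · intro t
    have hexp := hasDerivAt_exp_smul_const' (𝕂 := ℝ) A t
    have hmain := hexp.clm_apply (hw t)
    have hval : (A * NormedSpace.exp (t • A)) (w t)
          + NormedSpace.exp (t • A) (∑ k ∈ Finset.Icc 1 p, g k t)
        = A (y t) + ∑ j ∈ Finset.Icc 1 p, (t ^ (j - 1) / ((j - 1).factorial : ℝ)) • v j := by
      congr 1
      · rw [ContinuousLinearMap.mul_apply, ← hyw t]
      · rw [map_sum]
        refine Finset.sum_congr rfl fun k _ => ?_
        rw [hg]
        simp only [_root_.map_smul, exp_inv_apply]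
    rw [hval] at hmain
    exact hmain.congr_of_eventuallyEq (Filter.Eventually.of_forall fun u => hyw u)
  · have hset : Finset.range (p + 1) = insert 0 (Finset.Icc 1 p) := by
      ext x; simp [Nat.lt_succ_iff]; omega
    rw [hset, Finset.sum_insert (by simp), hy 1]
    congr 1
    · rw [one_smul]; rfl
    · refine Finset.sum_congr rfl fun k hk => ?_
      rw [one_pow, one_smul, one_smul]
end

section
/- Let E be a finite-dimensional real normed vector space, A : E → E a continuous linear map, p ≥ 1 an integer, v₀, …, v_p ∈ E, and let y(t) = exp(tA)(v₀) + Σ_{k=1}^{p} t^k·φ_k(tA)(v_k). Then for all s ≥ 0 and τ ≥ 0 the following time-stepping relation holds: y(s + τ) = exp(τA)(y(s)) + Σ_{i=1}^{p} τ^i · φ_i(τA)( Σ_{j=0}^{p−i} (s^j/j!)·v_{i+j} ). -/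
set_option maxHeartbeats 1000000
set_option synthInstance.maxHeartbeats 400000


open MeasureTheory intervalIntegral Finset

section Aux

variable {E : Type*} [NormedAddCommGroup E] [NormedSpace ℝ E] [FiniteDimensional ℝ E]
  (A : E →L[ℝ] E)

/-- Auxiliary: `ψ_k(t) = ∫₀ᵗ (σ^k/k!) exp((t-σ)A) dσ`, so `t^(k+1) φ_(k+1)(tA) = ψ_k(t)`. -/
noncomputable def psiOp (k : ℕ) (t : ℝ) : E →L[ℝ] E :=
  ∫ σ in (0:ℝ)..t, (σ ^ k / (k.factorial : ℝ)) • NormedSpace.exp ((t - σ) • A)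

lemma psi_cont (k : ℕ) (c : ℝ) :
    Continuous fun σ : ℝ => (σ ^ k / (k.factorial : ℝ)) • NormedSpace.exp ((c - σ) • A) := by
  let +nondep : NormedAlgebra ℚ (E →L[ℝ] E) := .restrictScalars ℚ ℝ (E →L[ℝ] E)
  apply Continuous.smul (f := fun σ : ℝ => σ ^ k / (k.factorial : ℝ))
    (g := fun σ : ℝ => NormedSpace.exp ((c - σ) • A))
  · fun_prop
  · exact NormedSpace.exp_continuous.comp (by fun_prop)

lemma psi_integrable (k : ℕ) (c a b : ℝ) :
    IntervalIntegrable
      (fun σ : ℝ => (σ ^ k / (k.factorial : ℝ)) • NormedSpace.exp ((c - σ) • A))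
      volume a b :=
  (psi_cont A k c).intervalIntegrable a b

lemma smul_phi_eq_psi (k : ℕ) (t : ℝ) :
    t ^ (k + 1) • phiOp (k + 1) (t • A) = psiOp A k t := by
  have h := intervalIntegral.smul_integral_comp_mul_left
      (a := (0:ℝ)) (b := 1)
      (fun σ : ℝ => (σ ^ k / (k.factorial : ℝ)) • NormedSpace.exp ((t - σ) • A)) t
  rw [mul_zero, mul_one] at h
  rw [psiOp, ← h]
  have hpt : ∀ θ : ℝ, ((t * θ) ^ k / (k.factorial : ℝ)) • NormedSpace.exp ((t - t * θ) • A)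
      = t ^ k • ((θ ^ k / (k.factorial : ℝ)) • NormedSpace.exp ((1 - θ) • (t • A))) := by
    intro θ
    have harg : (t - t * θ) • A = (1 - θ) • (t • A) := by
      rw [smul_smul]; congr 1; ring
    rw [show (t * θ) ^ k / (k.factorial : ℝ) = t ^ k * (θ ^ k / (k.factorial : ℝ)) by
      rw [mul_pow]; ring, mul_smul, harg]
  simp only [phiOp, hpt, intervalIntegral.integral_smul]
  rw [smul_smul]
  congr 1
  ring

/-- Scalar binomial identity with factorials. -/
lemma add_pow_div_factorial (s u : ℝ) (k : ℕ) :
    (s + u) ^ k / (k.factorial : ℝ)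
      = ∑ j ∈ Finset.range (k + 1),
          s ^ (k - j) / ((k - j).factorial : ℝ) * (u ^ j / (j.factorial : ℝ)) := by
  rw [show s + u = u + s from add_comm s u, add_pow, Finset.sum_div]
  refine Finset.sum_congr rfl fun j hj => ?_
  have hj' : j ≤ k := Nat.lt_succ_iff.mp (Finset.mem_range.mp hj)
  have key : ((k.choose j : ℕ) : ℝ) * (j.factorial : ℝ) * ((k - j).factorial : ℝ)
      = (k.factorial : ℝ) := by
    exact_mod_cast congrArg (fun n : ℕ => (n : ℝ)) (Nat.choose_mul_factorial_mul_factorial hj')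
  have h1 : (j.factorial : ℝ) ≠ 0 := Nat.cast_ne_zero.mpr j.factorial_ne_zero
  have h2 : ((k - j).factorial : ℝ) ≠ 0 := Nat.cast_ne_zero.mpr (k - j).factorial_ne_zero
  have h3 : (k.factorial : ℝ) ≠ 0 := Nat.cast_ne_zero.mpr k.factorial_ne_zero
  field_simp
  linear_combination (u ^ j * s ^ (k - j)) * key

set_option maxHeartbeats 1000000 in
/-- Key stepping identity for `ψ`. -/
lemma psi_step (k : ℕ) (s τ : ℝ) :
    psiOp A k (s + τ) = NormedSpace.exp (τ • A) * psiOp A k s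
      + ∑ j ∈ Finset.range (k + 1),
          (s ^ (k - j) / ((k - j).factorial : ℝ)) • psiOp A j τ := by
  rw [psiOp,
    ← intervalIntegral.integral_add_adjacent_intervals
      (psi_integrable A k (s + τ) 0 s) (psi_integrable A k (s + τ) s (s + τ))]
  have h1 : (∫ σ in (0:ℝ)..s, (σ ^ k / (k.factorial : ℝ)) • NormedSpace.exp ((s + τ - σ) • A))
      = NormedSpace.exp (τ • A) * psiOp A k s := by
    have hpt : ∀ σ : ℝ,
        (σ ^ k / (k.factorial : ℝ)) • NormedSpace.exp ((s + τ - σ) • A)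
          = (ContinuousLinearMap.mul ℝ (E →L[ℝ] E) (NormedSpace.exp (τ • A)))
              ((σ ^ k / (k.factorial : ℝ)) • NormedSpace.exp ((s - σ) • A)) := by
      intro σ
      have hc : Commute (τ • A) ((s - σ) • A) :=
        ((Commute.refl A).smul_left τ).smul_right (s - σ)
      have harg : (s + τ - σ) • A = τ • A + (s - σ) • A := by
        rw [← add_smul]; congr 1; ring
      let +nondep : NormedAlgebra ℚ (E →L[ℝ] E) := .restrictScalars ℚ ℝ (E →L[ℝ] E)
      rw [harg, NormedSpace.exp_add_of_commute hc]
      simp [ContinuousLinearMap.mul_apply', mul_smul_comm]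
    simp only [hpt]
    rw [ContinuousLinearMap.intervalIntegral_comp_comm _ (psi_integrable A k s 0 s)]
    simp [ContinuousLinearMap.mul_apply', psiOp]
  have h2 : (∫ σ in s..(s + τ),
        (σ ^ k / (k.factorial : ℝ)) • NormedSpace.exp ((s + τ - σ) • A))
      = ∑ j ∈ Finset.range (k + 1),
          (s ^ (k - j) / ((k - j).factorial : ℝ)) • psiOp A j τ := by
    have hshift := intervalIntegral.integral_comp_add_left
      (a := (0:ℝ)) (b := τ)
      (fun σ : ℝ => (σ ^ k / (k.factorial : ℝ)) • NormedSpace.exp ((s + τ - σ) • A)) s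
    rw [add_zero] at hshift
    rw [← hshift]
    have hpt : ∀ u : ℝ,
        ((s + u) ^ k / (k.factorial : ℝ)) • NormedSpace.exp ((s + τ - (s + u)) • A)
          = ∑ j ∈ Finset.range (k + 1),
              (s ^ (k - j) / ((k - j).factorial : ℝ)) •
                ((u ^ j / (j.factorial : ℝ)) • NormedSpace.exp ((τ - u) • A)) := by
      intro u
      have harg : (s + τ - (s + u)) • A = (τ - u) • A := by congr 1; ring
      rw [harg]
      simp only [smul_smul, ← Finset.sum_smul]
      congr 1
      exact add_pow_div_factorial s u k
    simp only [hpt]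
    rw [intervalIntegral.integral_finset_sum]
    · refine Finset.sum_congr rfl fun j _ => ?_
      rw [intervalIntegral.integral_smul]
      rfl
    · intro j _
      exact ((psi_cont A j τ).const_smul (s ^ (k - j) / ((k - j).factorial : ℝ))).intervalIntegrable 0 τ
  rw [h1, h2]

/-- Reindex over `Icc`. -/
lemma psi_step' (k : ℕ) (hk : 1 ≤ k) (s τ : ℝ) :
    psiOp A (k - 1) (s + τ) = NormedSpace.exp (τ • A) * psiOp A (k - 1) s
      + ∑ i ∈ Finset.Icc 1 k,
          (s ^ (k - i) / ((k - i).factorial : ℝ)) • psiOp A (i - 1) τ := by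
  obtain ⟨m, rfl⟩ : ∃ m, k = m + 1 := ⟨k - 1, (Nat.succ_pred_eq_of_pos hk).symm⟩
  simp only [Nat.add_sub_cancel]
  rw [psi_step A m s τ]
  congr 1
  refine Finset.sum_nbij' (fun j => j + 1) (fun i => i - 1) ?_ ?_ ?_ ?_ ?_
  · intro j hj; simp only [Finset.mem_range] at hj; simp only [Finset.mem_Icc]; omega
  · intro i hi; simp only [Finset.mem_Icc] at hi; simp only [Finset.mem_range]; omega
  · intro j hj; simp
  · intro i hi; simp only [Finset.mem_Icc] at hi; omega
  · intro j hj
    simp only [Finset.mem_range] at hj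
    have e1 : m + 1 - (j + 1) = m - j := by omega
    have e2 : j + 1 - 1 = j := by omega
    simp only [e1, e2]

end Aux

/-- Time-stepping relation: for `y(t) = exp(tA)v₀ + Σ_{k=1}^p t^k φ_k(tA) v_k` and
all `s, τ ≥ 0`,
`y(s+τ) = exp(τA)(y(s)) + Σ_{i=1}^p τ^i φ_i(τA)(Σ_{j=0}^{p-i} (s^j/j!) v_{i+j})`. -/
theorem phi_time_stepping_relation
    {E : Type*} [NormedAddCommGroup E] [NormedSpace ℝ E] [FiniteDimensional ℝ E]
    (A : E →L[ℝ] E) (p : ℕ) (hp : 1 ≤ p) (v : ℕ → E)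
    (y : ℝ → E)
    (hy : ∀ t : ℝ, y t = NormedSpace.exp (t • A) (v 0)
        + ∑ k ∈ Finset.Icc 1 p, t ^ k • phiOp k (t • A) (v k)) :
    ∀ s τ : ℝ, 0 ≤ s → 0 ≤ τ →
      y (s + τ) = NormedSpace.exp (τ • A) (y s)
        + ∑ i ∈ Finset.Icc 1 p, τ ^ i •
            phiOp i (τ • A)
              (∑ j ∈ Finset.range (p - i + 1), (s ^ j / (j.factorial : ℝ)) • v (i + j)) := by
  intro s τ hs hτ
  have key : ∀ k, 1 ≤ k → ∀ (t : ℝ) (x : E),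
      t ^ k • phiOp k (t • A) x = psiOp A (k - 1) t x := by
    intro k hk t x
    obtain ⟨m, rfl⟩ : ∃ m, k = m + 1 := ⟨k - 1, (Nat.succ_pred_eq_of_pos hk).symm⟩
    have := smul_phi_eq_psi A m t
    calc t ^ (m + 1) • phiOp (m + 1) (t • A) x
        = (t ^ (m + 1) • phiOp (m + 1) (t • A)) x := by
          rw [ContinuousLinearMap.smul_apply]
      _ = psiOp A (m + 1 - 1) t x := by rw [this]; norm_num
  rw [hy, hy]
  -- common form for both sides
  have hcomm : Commute (τ • A) (s • A) := ((Commute.refl A).smul_left τ).smul_right s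
  have hexp0 : NormedSpace.exp ((s + τ) • A) (v 0)
      = NormedSpace.exp (τ • A) (NormedSpace.exp (s • A) (v 0)) := by
    have harg : (s + τ) • A = τ • A + s • A := by rw [← add_smul]; congr 1; ring
    let +nondep : NormedAlgebra ℚ (E →L[ℝ] E) := .restrictScalars ℚ ℝ (E →L[ℝ] E)
    rw [harg, NormedSpace.exp_add_of_commute hcomm, ContinuousLinearMap.mul_apply]
  -- LHS
  have hL : NormedSpace.exp ((s + τ) • A) (v 0)
        + ∑ k ∈ Finset.Icc 1 p, (s + τ) ^ k • phiOp k ((s + τ) • A) (v k)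
      = NormedSpace.exp (τ • A) (NormedSpace.exp (s • A) (v 0))
        + ∑ k ∈ Finset.Icc 1 p, NormedSpace.exp (τ • A) (psiOp A (k - 1) s (v k))
        + ∑ k ∈ Finset.Icc 1 p, ∑ i ∈ Finset.Icc 1 k,
            (s ^ (k - i) / ((k - i).factorial : ℝ)) • psiOp A (i - 1) τ (v k) := by
    rw [hexp0, add_assoc]
    congr 1
    rw [← Finset.sum_add_distrib]
    refine Finset.sum_congr rfl fun k hk => ?_
    have hk1 : 1 ≤ k := (Finset.mem_Icc.mp hk).1
    rw [key k hk1 (s + τ) (v k), psi_step' A k hk1 s τ]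
    simp only [ContinuousLinearMap.add_apply, ContinuousLinearMap.mul_apply,
      ContinuousLinearMap.sum_apply, ContinuousLinearMap.smul_apply]
  -- RHS
  have hR : NormedSpace.exp (τ • A)
        (NormedSpace.exp (s • A) (v 0) + ∑ k ∈ Finset.Icc 1 p, s ^ k • phiOp k (s • A) (v k))
        + ∑ i ∈ Finset.Icc 1 p, τ ^ i • phiOp i (τ • A)
            (∑ j ∈ Finset.range (p - i + 1), (s ^ j / (j.factorial : ℝ)) • v (i + j))
      = NormedSpace.exp (τ • A) (NormedSpace.exp (s • A) (v 0))
        + ∑ k ∈ Finset.Icc 1 p, NormedSpace.exp (τ • A) (psiOp A (k - 1) s (v k))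
        + ∑ i ∈ Finset.Icc 1 p, ∑ k ∈ Finset.Icc i p,
            (s ^ (k - i) / ((k - i).factorial : ℝ)) • psiOp A (i - 1) τ (v k) := by
    rw [map_add, map_sum]
    have e1 : ∀ k ∈ Finset.Icc 1 p,
        NormedSpace.exp (τ • A) (s ^ k • phiOp k (s • A) (v k))
          = NormedSpace.exp (τ • A) (psiOp A (k - 1) s (v k)) := by
      intro k hk
      have hk1 : 1 ≤ k := (Finset.mem_Icc.mp hk).1
      rw [key k hk1 s (v k)]
    have e2 : ∀ i ∈ Finset.Icc 1 p,
        τ ^ i • phiOp i (τ • A)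
            (∑ j ∈ Finset.range (p - i + 1), (s ^ j / (j.factorial : ℝ)) • v (i + j))
          = ∑ k ∈ Finset.Icc i p,
              (s ^ (k - i) / ((k - i).factorial : ℝ)) • psiOp A (i - 1) τ (v k) := by
      intro i hi
      obtain ⟨hi1, hip⟩ := Finset.mem_Icc.mp hi
      rw [key i hi1 τ _, map_sum]
      refine Finset.sum_nbij' (fun j => i + j) (fun k => k - i) ?_ ?_ ?_ ?_ ?_
      · intro j hj; simp only [Finset.mem_range] at hj; simp only [Finset.mem_Icc]; omega
      · intro k hk; simp only [Finset.mem_Icc] at hk; simp only [Finset.mem_range]; omega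
      · intro j hj; simp
      · intro k hk; simp only [Finset.mem_Icc] at hk; omega
      · intro j hj
        simp only [Finset.mem_range] at hj
        show psiOp A (i - 1) τ ((s ^ j / (j.factorial : ℝ)) • v (i + j))
          = (s ^ (i + j - i) / ((i + j - i).factorial : ℝ)) • psiOp A (i - 1) τ (v (i + j))
        have e1 : i + j - i = j := by omega
        rw [e1, _root_.map_smul]
    rw [Finset.sum_congr rfl e1, Finset.sum_congr rfl e2, add_assoc]
  rw [hL, hR]
  congr 1
  refine Finset.sum_comm' fun k i => ?_
  simp only [Finset.mem_Icc]
  omega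
end

section
/- Let E be a finite-dimensional real normed vector space, A : E → E a continuous linear map, p ≥ 1 an integer, v₀, …, v_p ∈ E, and let y(t) = exp(tA)(v₀) + Σ_{k=1}^{p} t^k·φ_k(tA)(v_k). Fix s ≥ 0 and define vectors w₀, …, w_p by the recurrence w₀ = y(s) and w_j = A(w_{j−1}) + Σ_{ℓ=0}^{p−j} (s^ℓ/ℓ!)·v_{j+ℓ} for j = 1, …, p. Then for all τ ≥ 0, y(s + τ) = τ^p · φ_p(τA)(w_p) + Σ_{j=0}^{p−1} (τ^j/j!)·w_j; i.e., each substep of the time-stepping scheme requires the evaluation of only the single matrix function φ_p(τA)w_p. -/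
open MeasureTheory intervalIntegral Finset

set_option maxHeartbeats 1000000
set_option synthInstance.maxHeartbeats 200000

noncomputable instance clmNormedAlgebraRat {E : Type*} [NormedAddCommGroup E] [NormedSpace ℝ E] :
    NormedAlgebra ℚ (E →L[ℝ] E) :=
  NormedAlgebra.restrictScalars ℚ ℝ (E →L[ℝ] E)

section Aux
variable {E : Type*} [NormedAddCommGroup E] [NormedSpace ℝ E] [FiniteDimensional ℝ E]

lemma phiOp_zero (B : E →L[ℝ] E) : phiOp 0 B = NormedSpace.exp B := rfl

lemma phiOp_succ (k : ℕ) (B : E →L[ℝ] E) :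
    phiOp (k + 1) B
      = ∫ θ in (0:ℝ)..1, (θ ^ k / (k.factorial : ℝ)) • NormedSpace.exp ((1 - θ) • B) := rfl

lemma contE {g : ℝ → ℝ} (hg : Continuous g) (B : E →L[ℝ] E) :
    Continuous fun σ : ℝ => NormedSpace.exp (g σ • B) :=
  NormedSpace.exp_continuous.comp (hg.smul continuous_const)

lemma contP {g c : ℝ → ℝ} (hg : Continuous g) (hc : Continuous c) (B : E →L[ℝ] E) :
    Continuous fun σ : ℝ => c σ • NormedSpace.exp (g σ • B) :=
  hc.smul (contE hg B)

lemma phi_rec (B : E →L[ℝ] E) (k : ℕ) :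
    phiOp k B = phiOp (k + 1) B * B + ((k.factorial : ℝ))⁻¹ • 1 := by
  have hgc : Continuous fun θ : ℝ => NormedSpace.exp ((1 - θ) • B) :=
    contE (continuous_const.sub continuous_id) B
  have hgd : ∀ θ : ℝ, HasDerivAt (fun θ : ℝ => NormedSpace.exp ((1 - θ) • B))
      (-(NormedSpace.exp ((1 - θ) • B) * B)) θ := by
    intro θ
    have h1 := hasDerivAt_exp_smul_const (𝕂 := ℝ) B (1 - θ)
    have h2 : HasDerivAt (fun θ : ℝ => 1 - θ) (-1 : ℝ) θ := by
      simpa using (hasDerivAt_id θ).const_sub 1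
    have h := h1.scomp θ h2
    simp only [neg_one_smul] at h
    exact h
  have hfd : ∀ θ : ℝ,
      HasDerivAt (fun θ : ℝ => (θ ^ k / (k.factorial : ℝ)) • NormedSpace.exp ((1 - θ) • B))
        (((k : ℝ) * θ ^ (k - 1) / (k.factorial : ℝ)) • NormedSpace.exp ((1 - θ) • B)
          - (θ ^ k / (k.factorial : ℝ)) • (NormedSpace.exp ((1 - θ) • B) * B)) θ := by
    intro θ
    have hc : HasDerivAt (fun θ : ℝ => θ ^ k / (k.factorial : ℝ))
        ((k : ℝ) * θ ^ (k - 1) / (k.factorial : ℝ)) θ := (hasDerivAt_pow k θ).div_const _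
    have h := hc.smul (hgd θ)
    rw [smul_neg, neg_add_eq_sub] at h
    exact h
  have hint1 : IntervalIntegrable
      (fun θ : ℝ => ((k : ℝ) * θ ^ (k - 1) / (k.factorial : ℝ))
        • NormedSpace.exp ((1 - θ) • B)) volume 0 1 :=
    (contP (continuous_const.sub continuous_id)
      (((continuous_const.mul (continuous_pow _)).div_const _)) B).intervalIntegrable _ _
  have hint2 : IntervalIntegrable
      (fun θ : ℝ => (θ ^ k / (k.factorial : ℝ))
        • (NormedSpace.exp ((1 - θ) • B) * B)) volume 0 1 :=
    (((continuous_pow k).div_const _).smul (hgc.mul continuous_const)).intervalIntegrable _ _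
  have hFTC := intervalIntegral.integral_eq_sub_of_hasDerivAt
    (f := fun θ : ℝ => (θ ^ k / (k.factorial : ℝ)) • NormedSpace.exp ((1 - θ) • B))
    (fun θ _ => hfd θ) (hint1.sub hint2)
  rw [intervalIntegral.integral_sub hint1 hint2] at hFTC
  have hI2 : (∫ θ in (0:ℝ)..1, (θ ^ k / (k.factorial : ℝ))
        • (NormedSpace.exp ((1 - θ) • B) * B)) = phiOp (k + 1) B * B := by
    have hint3 : IntervalIntegrable
        (fun θ : ℝ => (θ ^ k / (k.factorial : ℝ)) • NormedSpace.exp ((1 - θ) • B))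
        volume 0 1 := (contP (continuous_const.sub continuous_id)
          ((continuous_pow k).div_const _) B).intervalIntegrable _ _
    have h4 := ((ContinuousLinearMap.mul ℝ (E →L[ℝ] E)).flip B).intervalIntegral_comp_comm hint3
    simp only [ContinuousLinearMap.flip_apply, ContinuousLinearMap.mul_apply',
      ContinuousLinearMap.smul_apply] at h4
    rw [phiOp_succ, ← h4]
    simp only [smul_mul_assoc]
  rw [hI2] at hFTC
  rcases k with _ | j
  · simp only [Nat.cast_zero, zero_mul, zero_div, zero_smul,
      intervalIntegral.integral_zero, zero_sub, pow_zero, Nat.factorial_zero,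
      Nat.cast_one, div_one, one_smul, sub_zero, sub_self, zero_smul,
      NormedSpace.exp_zero] at hFTC
    have hX : phiOp 1 B * B = NormedSpace.exp B - 1 := by
      have h5 := neg_eq_iff_eq_neg.mp hFTC
      rw [h5, neg_sub]
    show NormedSpace.exp B = _
    rw [hX]
    simp
  · have e : (fun θ : ℝ => (((j+1 : ℕ) : ℝ) * θ ^ (j + 1 - 1) / (((j+1).factorial : ℝ)))
          • NormedSpace.exp ((1 - θ) • B))
        = fun θ : ℝ => (θ ^ j / (j.factorial : ℝ)) • NormedSpace.exp ((1 - θ) • B) := by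
      funext θ
      congr 1
      rw [Nat.add_sub_cancel, Nat.factorial_succ]
      push_cast
      rw [mul_div_mul_left _ _ (by positivity : ((j:ℝ) + 1) ≠ 0)]
    rw [e, ← phiOp_succ] at hFTC
    norm_num [NormedSpace.exp_zero] at hFTC
    rw [sub_eq_iff_eq_add.mp hFTC, add_comm]

end Aux

section Shift
variable {E : Type*} [NormedAddCommGroup E] [NormedSpace ℝ E] [FiniteDimensional ℝ E]

lemma phi_scale (A : E →L[ℝ] E) (k : ℕ) (t : ℝ) :
    t ^ (k + 1) • phiOp (k + 1) (t • A)
      = ∫ σ in (0:ℝ)..t, (σ ^ k / (k.factorial : ℝ)) • NormedSpace.exp ((t - σ) • A) := by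
  have key := intervalIntegral.smul_integral_comp_mul_left
    (f := fun σ : ℝ => (σ ^ k / (k.factorial : ℝ)) • NormedSpace.exp ((t - σ) • A))
    (a := (0:ℝ)) (b := 1) t
  simp only [mul_zero, mul_one] at key
  rw [← key]
  have h1 : ∀ θ : ℝ, ((t * θ) ^ k / (k.factorial : ℝ)) • NormedSpace.exp ((t - t * θ) • A)
      = t ^ k • ((θ ^ k / (k.factorial : ℝ)) • NormedSpace.exp ((1 - θ) • (t • A))) := by
    intro θ
    have e1 : (t - t * θ) • A = (1 - θ) • (t • A) := by
      rw [smul_smul]; congr 1; ring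
    have e2 : (t * θ) ^ k / (k.factorial : ℝ) = t ^ k * (θ ^ k / (k.factorial : ℝ)) := by
      rw [mul_pow]; ring
    rw [e1, e2, mul_smul]
  simp only [h1]
  rw [intervalIntegral.integral_smul, phiOp_succ, smul_smul, ← pow_succ']

lemma phi_shift (A : E →L[ℝ] E) (k : ℕ) (s τ : ℝ) :
    (s + τ) ^ (k + 1) • phiOp (k + 1) ((s + τ) • A)
      = NormedSpace.exp (τ • A) * (s ^ (k + 1) • phiOp (k + 1) (s • A))
        + ∑ i ∈ Finset.range (k + 1),
            (s ^ (k - i) / ((k - i).factorial : ℝ)) • (τ ^ (i + 1) • phiOp (i + 1) (τ • A)) := by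
  rw [phi_scale]
  -- split the integral at s
  have hi1 : IntervalIntegrable
      (fun σ : ℝ => (σ ^ k / (k.factorial : ℝ)) • NormedSpace.exp ((s + τ - σ) • A))
      volume 0 s :=
    (contP (continuous_const.sub continuous_id)
      ((continuous_pow k).div_const _) A).intervalIntegrable _ _
  have hi2 : IntervalIntegrable
      (fun σ : ℝ => (σ ^ k / (k.factorial : ℝ)) • NormedSpace.exp ((s + τ - σ) • A))
      volume s (s + τ) :=
    (contP (continuous_const.sub continuous_id)
      ((continuous_pow k).div_const _) A).intervalIntegrable _ _
  rw [← intervalIntegral.integral_add_adjacent_intervals hi1 hi2]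
  congr 1
  · -- first piece equals exp(τ•A) * (s^(k+1) • phiOp (k+1) (s•A))
    have hcomm : ∀ σ : ℝ, (s + τ - σ) • A = τ • A + (s - σ) • A := by
      intro σ; rw [← add_smul]; congr 1; ring
    have hmul : ∀ σ : ℝ, NormedSpace.exp ((s + τ - σ) • A)
        = NormedSpace.exp (τ • A) * NormedSpace.exp ((s - σ) • A) := by
      intro σ
      rw [hcomm σ]
      exact NormedSpace.exp_add_of_commute (((Commute.refl A).smul_right (s - σ)).smul_left τ)
    have h5 : ∀ σ : ℝ, (σ ^ k / (k.factorial : ℝ)) • NormedSpace.exp ((s + τ - σ) • A)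
        = NormedSpace.exp (τ • A) * ((σ ^ k / (k.factorial : ℝ))
            • NormedSpace.exp ((s - σ) • A)) := by
      intro σ
      rw [hmul σ, mul_smul_comm]
    simp only [h5]
    have hint : IntervalIntegrable
        (fun σ : ℝ => (σ ^ k / (k.factorial : ℝ)) • NormedSpace.exp ((s - σ) • A))
        volume 0 s :=
      (contP (continuous_const.sub continuous_id)
        ((continuous_pow k).div_const _) A).intervalIntegrable _ _
    have h6 := ((ContinuousLinearMap.mul ℝ (E →L[ℝ] E))
        (NormedSpace.exp (τ • A))).intervalIntegral_comp_comm hint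
    simp only [ContinuousLinearMap.mul_apply'] at h6
    rw [h6, ← phi_scale]
  · -- second piece
    have h7 := intervalIntegral.integral_comp_add_right (a := (0:ℝ)) (b := τ)
      (f := fun σ : ℝ => (σ ^ k / (k.factorial : ℝ)) • NormedSpace.exp ((s + τ - σ) • A)) s
    simp only [zero_add] at h7
    rw [show τ + s = s + τ by ring] at h7
    rw [← h7]
    have h8 : ∀ ρ : ℝ, ((ρ + s) ^ k / (k.factorial : ℝ))
          • NormedSpace.exp ((s + τ - (ρ + s)) • A)
        = ∑ i ∈ Finset.range (k + 1),
            (s ^ (k - i) / ((k - i).factorial : ℝ))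
              • ((ρ ^ i / (i.factorial : ℝ)) • NormedSpace.exp ((τ - ρ) • A)) := by
      intro ρ
      have e1 : (s + τ - (ρ + s)) • A = (τ - ρ) • A := by congr 1; ring
      rw [e1, add_pow]
      rw [Finset.sum_div, Finset.sum_smul]
      refine Finset.sum_congr rfl fun i hi => ?_
      have hik : i ≤ k := Nat.lt_succ_iff.mp (Finset.mem_range.mp hi)
      rw [smul_smul]
      congr 1
      have hfac := Nat.choose_mul_factorial_mul_factorial hik
      have hfac' : ((k.choose i : ℝ)) * (i.factorial : ℝ) * ((k - i).factorial : ℝ)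
          = (k.factorial : ℝ) := by exact_mod_cast congrArg Nat.cast hfac
      have hi0 : (i.factorial : ℝ) ≠ 0 := Nat.cast_ne_zero.mpr i.factorial_ne_zero
      have hki0 : ((k - i).factorial : ℝ) ≠ 0 := Nat.cast_ne_zero.mpr (k - i).factorial_ne_zero
      have hk0 : (k.factorial : ℝ) ≠ 0 := Nat.cast_ne_zero.mpr k.factorial_ne_zero
      field_simp
      linear_combination (ρ ^ i * s ^ (k - i)) * hfac'
    simp only [h8]
    have hsum : (∫ ρ in (0:ℝ)..τ, ∑ i ∈ Finset.range (k + 1),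
          (s ^ (k - i) / ((k - i).factorial : ℝ))
            • ((ρ ^ i / (i.factorial : ℝ)) • NormedSpace.exp ((τ - ρ) • A)))
        = ∑ i ∈ Finset.range (k + 1), ∫ ρ in (0:ℝ)..τ,
            (s ^ (k - i) / ((k - i).factorial : ℝ))
              • ((ρ ^ i / (i.factorial : ℝ)) • NormedSpace.exp ((τ - ρ) • A)) := by
      refine intervalIntegral.integral_finset_sum (fun i _ => ?_)
      refine Continuous.intervalIntegrable ?_ _ _
      exact (contP (continuous_const.sub continuous_id)
        ((continuous_pow i).div_const _) A).const_smul (s ^ (k - i) / ((k - i).factorial : ℝ))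
    rw [hsum]
    refine Finset.sum_congr rfl fun i hi => ?_
    rw [intervalIntegral.integral_smul, ← phi_scale]

end Shift

/-- With `y(t) = exp(tA)v₀ + Σ_{k=1}^p t^k φ_k(tA) v_k`, `w₀ = y(s)` and
`w_j = A w_{j-1} + Σ_{ℓ=0}^{p-j} (s^ℓ/ℓ!) v_{j+ℓ}` for `j = 1, …, p`, one has
`y(s+τ) = τ^p φ_p(τA) w_p + Σ_{j=0}^{p-1} (τ^j/j!) w_j`: each substep requires the
evaluation of only the single matrix function `φ_p(τA) w_p`. -/
theorem phi_time_stepping_single_phi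
    {E : Type*} [NormedAddCommGroup E] [NormedSpace ℝ E] [FiniteDimensional ℝ E]
    (A : E →L[ℝ] E) (p : ℕ) (hp : 1 ≤ p) (v : ℕ → E)
    (y : ℝ → E)
    (hy : ∀ t : ℝ, y t = NormedSpace.exp (t • A) (v 0)
        + ∑ k ∈ Finset.Icc 1 p, t ^ k • phiOp k (t • A) (v k))
    (s : ℝ) (hs : 0 ≤ s)
    (w : ℕ → E) (hw0 : w 0 = y s)
    (hwj : ∀ j : ℕ, 1 ≤ j → j ≤ p →
      w j = A (w (j - 1))
        + ∑ ℓ ∈ Finset.range (p - j + 1), (s ^ ℓ / (ℓ.factorial : ℝ)) • v (j + ℓ)) :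
    ∀ τ : ℝ, 0 ≤ τ →
      y (s + τ) = τ ^ p • phiOp p (τ • A) (w p)
        + ∑ j ∈ Finset.range p, (τ ^ j / (j.factorial : ℝ)) • w j := by
  intro τ _
  have icc : ∀ (f : ℕ → E), (∑ k ∈ Finset.Icc 1 p, f k) = ∑ i ∈ Finset.range p, f (i + 1) := by
    intro f
    rw [← Finset.Ico_add_one_right_eq_Icc, Finset.sum_Ico_eq_sum_range]
    simp [Nat.add_comm]
  have hexp : NormedSpace.exp ((s + τ) • A)
      = NormedSpace.exp (τ • A) * NormedSpace.exp (s • A) := by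
    rw [show (s + τ) • A = τ • A + s • A by rw [← add_smul]; congr 1; ring]
    exact NormedSpace.exp_add_of_commute (((Commute.refl A).smul_right s).smul_left τ)
  have happly : ∀ i : ℕ, (s + τ) ^ (i + 1) • phiOp (i + 1) ((s + τ) • A) (v (i + 1))
      = NormedSpace.exp (τ • A) (s ^ (i + 1) • phiOp (i + 1) (s • A) (v (i + 1)))
        + ∑ r ∈ Finset.range (i + 1),
            (s ^ (i - r) / ((i - r).factorial : ℝ))
              • (τ ^ (r + 1) • phiOp (r + 1) (τ • A) (v (i + 1))) := by
    intro i
    have h := congrArg (fun (L : E →L[ℝ] E) => L (v (i + 1))) (phi_shift A i s τ)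
    simpa [ContinuousLinearMap.add_apply, ContinuousLinearMap.smul_apply,
      ContinuousLinearMap.sum_apply, ContinuousLinearMap.mul_apply, _root_.map_smul] using h
  have hstep : y (s + τ) = NormedSpace.exp (τ • A) (y s)
      + ∑ r ∈ Finset.Ico 0 p, τ ^ (r + 1) • phiOp (r + 1) (τ • A)
          (∑ ℓ ∈ Finset.range (p - (r + 1) + 1),
            (s ^ ℓ / (ℓ.factorial : ℝ)) • v (r + 1 + ℓ)) := by
    rw [hy (s + τ), icc]
    rw [Finset.sum_congr rfl (fun i _ => happly i), Finset.sum_add_distrib]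
    rw [← add_assoc]
    congr 1
    · rw [hexp, ContinuousLinearMap.mul_apply, ← map_sum, ← map_add]
      congr 1
      rw [hy s, icc]
    · -- double sum swap
      rw [Finset.sum_comm' (t' := Finset.range p) (s' := fun r => Finset.Ico r p)
        (by intro i r; simp only [Finset.mem_range, Finset.mem_Ico]; omega)]
      rw [← Finset.range_eq_Ico]
      refine Finset.sum_congr rfl fun r hr => ?_
      have hrp : r < p := Finset.mem_range.mp hr
      rw [Finset.sum_Ico_eq_sum_range,
        show p - (r + 1) + 1 = p - r from by omega,
        _root_.map_sum, Finset.smul_sum]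
      refine Finset.sum_congr rfl fun ℓ _ => ?_
      rw [show r + ℓ - r = ℓ from by omega, show r + 1 + ℓ = r + ℓ + 1 from by omega,
        _root_.map_smul]
      rw [smul_comm]
  have claim : ∀ j, j ≤ p → y (s + τ)
      = (∑ i ∈ Finset.range j, (τ ^ i / (i.factorial : ℝ)) • w i)
        + τ ^ j • phiOp j (τ • A) (w j)
        + ∑ r ∈ Finset.Ico j p, τ ^ (r + 1) • phiOp (r + 1) (τ • A)
            (∑ ℓ ∈ Finset.range (p - (r + 1) + 1),
              (s ^ ℓ / (ℓ.factorial : ℝ)) • v (r + 1 + ℓ)) := by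
    intro j
    induction j with
    | zero =>
      intro _
      simpa [hw0, phiOp_zero] using hstep
    | succ j ih =>
      intro hjp
      have hj : j ≤ p := by omega
      rw [ih hj]
      -- expand the middle term using phi_rec
      have hmid : τ ^ j • phiOp j (τ • A) (w j)
          = τ ^ (j + 1) • phiOp (j + 1) (τ • A) (A (w j))
            + (τ ^ j / (j.factorial : ℝ)) • w j := by
        have h := congrArg (fun (L : E →L[ℝ] E) => τ ^ j • L (w j)) (phi_rec (τ • A) j)
        simp only [ContinuousLinearMap.add_apply, ContinuousLinearMap.mul_apply,
          ContinuousLinearMap.smul_apply, ContinuousLinearMap.one_apply,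
          _root_.map_smul, smul_add, smul_smul] at h
        rw [h, ← pow_succ, ← div_eq_mul_inv]
      rw [hmid]
      -- peel off the r = j term of the Ico sum
      rw [Finset.sum_eq_sum_Ico_succ_bot (by omega : j < p)]
      -- recombine: A (w j) + u_{j+1} = w (j+1)
      have hw' : w (j + 1) = A (w j)
          + ∑ ℓ ∈ Finset.range (p - (j + 1) + 1),
              (s ^ ℓ / (ℓ.factorial : ℝ)) • v (j + 1 + ℓ) := by
        have := hwj (j + 1) (by omega) hjp
        simpa using this
      rw [show (∑ i ∈ Finset.range (j + 1), (τ ^ i / (i.factorial : ℝ)) • w i)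
          = (∑ i ∈ Finset.range j, (τ ^ i / (i.factorial : ℝ)) • w i)
            + (τ ^ j / (j.factorial : ℝ)) • w j from Finset.sum_range_succ _ j]
      rw [hw', map_add, smul_add]
      abel
  have := claim p le_rfl
  rw [Finset.Ico_self, Finset.sum_empty, add_zero] at this
  rw [this, add_comm]
end
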